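/- Let F, G: [0,∞) → [0,∞) be increasing continuous functions with F(0) = G(0) = 0 and F(∞) = G(∞) = ∞. Then the following are equivalent: (i) F ∘ G^{-1} is equivalent to a Young function; (ii) there exist C, x₀ > 0 such that F(G^{-1}(sx)) ≥ C^{-1} s F(G^{-1}(x)) for all s ≥ 1 and x ≥ x₀; (iii) there exist C, x₀ > 0 such that F(sx)/F(x) ≥ C^{-1} G(sx)/G(x) for all s ≥ 1 and x ≥ x₀. -/

import Mathlib

open Filter Topology MeasureTheory
open scoped ENNReal
noncomputable section

/-- A Young function: strictly increasing, convex on `[0,∞)`, vanishing at `0`. -/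
def IsYoung (f : ℝ → ℝ) : Prop :=
  StrictMonoOn f (Set.Ici 0) ∧ ConvexOn ℝ (Set.Ici 0) f ∧ f 0 = 0

/-- Legendre transform of a real function (sup over `y ≥ 0`), `ℝ≥0∞`-valued. -/
def Leg (f : ℝ → ℝ) (x : ℝ) : ℝ≥0∞ :=
  ⨆ y : {y : ℝ // 0 ≤ y}, ENNReal.ofReal (x * y - f y)

/-- Legendre transform of an `ℝ≥0∞`-valued function. -/
def LegE (f : ℝ → ℝ≥0∞) (x : ℝ) : ℝ≥0∞ :=
  ⨆ y : {y : ℝ // 0 ≤ y}, (ENNReal.ofReal (x * y) - f y)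

/-- Monotone extension of a real function on `[0,∞)` to `ℝ≥0∞` arguments. -/
def extE (f : ℝ → ℝ) (t : ℝ≥0∞) : ℝ≥0∞ :=
  ⨆ s : {s : ℝ // 0 ≤ s ∧ ENNReal.ofReal s ≤ t}, ENNReal.ofReal (f s)

/-- Monotone extension of an `ℝ≥0∞`-valued function to `ℝ≥0∞` arguments. -/
def extLT (f : ℝ → ℝ≥0∞) (t : ℝ≥0∞) : ℝ≥0∞ :=
  ⨆ s : {s : ℝ // 0 ≤ s ∧ ENNReal.ofReal s ≤ t}, f s

/-- Generalized (right-continuous) inverse of an `ℝ≥0∞`-valued function. -/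
def invE (g : ℝ → ℝ≥0∞) (t : ℝ≥0∞) : ℝ≥0∞ :=
  ⨅ s : {s : ℝ // 0 ≤ s ∧ t ≤ g s}, ENNReal.ofReal s

/-- `ρ(x) = sup_{y ≥ 0} (φ(xy) - ψ(y))/y`. -/
def rhoSup (φ ψ : ℝ → ℝ) (x : ℝ) : ℝ≥0∞ :=
  ⨆ y : {y : ℝ // 0 ≤ y}, ENNReal.ofReal ((φ (x * y) - ψ y) / y)

/-- `ζ(x) = sup_{y ≥ 0} (φ(xy) - ψ(y)/y)`. -/
def zetaSup (φ ψ : ℝ → ℝ) (x : ℝ) : ℝ≥0∞ :=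
  ⨆ y : {y : ℝ // 0 ≤ y}, ENNReal.ofReal (φ (x * y) - ψ y / y)

/-- Domination order on real functions: `f(x) ≤ C₁ g(C₂ x)` for large `x`. -/
def DominR (f g : ℝ → ℝ) : Prop :=
  ∃ C₁ C₂ x₀ : ℝ, 0 < C₁ ∧ 0 < C₂ ∧ 0 < x₀ ∧ ∀ x ≥ x₀, f x ≤ C₁ * g (C₂ * x)

/-- Equivalence of real functions: mutual domination. -/
def EquivR (f g : ℝ → ℝ) : Prop := DominR f g ∧ DominR g f

/-- Domination order on `ℝ≥0∞`-valued functions. -/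
def DominE (f g : ℝ → ℝ≥0∞) : Prop :=
  ∃ C₁ C₂ x₀ : ℝ, 0 < C₁ ∧ 0 < C₂ ∧ 0 < x₀ ∧
    ∀ x ≥ x₀, f x ≤ ENNReal.ofReal C₁ * g (C₂ * x)

/-- Equivalence of `ℝ≥0∞`-valued functions: mutual domination. -/
def EquivE (f g : ℝ → ℝ≥0∞) : Prop := DominE f g ∧ DominE g f

lemma young_of_ii (H : ℝ → ℝ)
    (hnn : ∀ x ≥ (0:ℝ), 0 ≤ H x)
    (C x₀ : ℝ) (hC : 0 < C) (hx₀ : 0 < x₀) (hKpos : 0 < H x₀)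
    (hii : ∀ s ≥ (1:ℝ), ∀ x ≥ x₀, C⁻¹ * s * H x ≤ H (s * x)) :
    ∃ Y, IsYoung Y ∧ EquivR H Y := by
  set K := H x₀ / x₀ with hKdef
  have hKp : 0 < K := div_pos hKpos hx₀
  set h : ℝ → ℝ := fun t => if t < x₀ then K else H t / t with hhdef
  have key : ∀ t x : ℝ, x₀ ≤ t → t ≤ x → H t / t ≤ C * (H x / x) := by
    intro t x ht htx
    have ht0 : 0 < t := lt_of_lt_of_le hx₀ ht
    have hx0 : 0 < x := lt_of_lt_of_le ht0 htx
    have hs : (1:ℝ) ≤ x / t := (one_le_div ht0).2 htx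
    have h1 := hii (x/t) hs t ht
    rw [div_mul_cancel₀ _ (ne_of_gt ht0)] at h1
    -- h1 : C⁻¹ * (x / t) * H t ≤ H x
    rw [← mul_div_assoc, div_le_div_iff₀ ht0 hx0]
    have h2 : x / t * H t ≤ C * H x := by
      calc x / t * H t = C * (C⁻¹ * (x/t) * H t) := by field_simp
        _ ≤ C * H x := by nlinarith
    have h3 : x / t * H t * t = H t * x := by field_simp
    nlinarith
  have hhx : ∀ x, x₀ ≤ x → h x = H x / x := fun x hx => if_neg (not_lt.2 hx)
  have hh_nn : ∀ t, 0 ≤ h t := by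
    intro t
    by_cases ht : t < x₀
    · simp [hhdef, if_pos ht, hKp.le]
    · push_neg at ht
      rw [hhx t ht]
      exact div_nonneg (hnn t (hx₀.le.trans ht)) (hx₀.le.trans ht)
  have hai : ∀ x, x₀ ≤ x → ∀ t, 0 ≤ t → t ≤ x → h t ≤ C * h x := by
    intro x hx t ht0 htx
    rw [hhx x hx]
    by_cases ht : t < x₀
    · rw [hhdef]; simp only [if_pos ht]
      exact key x₀ x le_rfl hx
    · push_neg at ht
      rw [hhx t ht]
      exact key t x ht htx
  set M : ℝ → ℝ := fun x => K + C * h (max x x₀) with hMdef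
  have hMp : ∀ x, 0 < M x := by
    intro x
    have := hh_nn (max x x₀)
    have : 0 ≤ C * h (max x x₀) := mul_nonneg hC.le this
    simp only [hMdef]; linarith
  have hb1 : ∀ x t : ℝ, 0 ≤ t → t ≤ x → h t ≤ M x := by
    intro x t ht0 htx
    by_cases ht : t < x₀
    · rw [hhdef]; simp only [if_pos ht, hMdef]
      have : 0 ≤ C * h (max x x₀) := mul_nonneg hC.le (hh_nn _)
      linarith
    · push_neg at ht
      have := hai (max x x₀) (le_max_right _ _) t ht0 (htx.trans (le_max_left _ _))
      simp only [hMdef]; linarith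
  have hbd : ∀ x : ℝ, 0 ≤ x → ∀ y ∈ ((fun t => h t * (x - t)) '' Set.Icc 0 x), y ≤ M x * x := by
    rintro x hx y ⟨t, ⟨ht0, htx⟩, rfl⟩
    calc h t * (x - t) ≤ h t * x := by
          have := hh_nn t
          nlinarith
      _ ≤ M x * x := mul_le_mul_of_nonneg_right (hb1 x t ht0 htx) hx
  have hBdd : ∀ x : ℝ, 0 ≤ x → BddAbove ((fun t => h t * (x - t)) '' Set.Icc 0 x) :=
    fun x hx => ⟨M x * x, fun y hy => hbd x hx y hy⟩
  set S : ℝ → ℝ := fun x => sSup ((fun t => h t * (x - t)) '' Set.Icc 0 x) with hSdef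
  have h0K : h 0 = K := if_pos hx₀
  have hmemKx : ∀ x, 0 ≤ x → K * x ≤ S x := by
    intro x hx
    have : h 0 * (x - 0) ∈ ((fun t => h t * (x - t)) '' Set.Icc 0 x) :=
      ⟨0, ⟨le_rfl, hx⟩, rfl⟩
    have := le_csSup (hBdd x hx) this
    rwa [h0K, sub_zero] at this
  have hSnn : ∀ x, 0 ≤ x → 0 ≤ S x := fun x hx =>
    le_trans (by positivity) (hmemKx x hx)
  have hterm : ∀ x, 0 ≤ x → ∀ t, 0 ≤ t → h t * (x - t) ≤ S x := by
    intro x hx t ht0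
    rcases le_or_gt t x with h1 | h1
    · exact le_csSup (hBdd x hx) ⟨t, ⟨ht0, h1⟩, rfl⟩
    · have : h t * (x - t) ≤ 0 := mul_nonpos_of_nonneg_of_nonpos (hh_nn t) (by linarith)
      exact this.trans (hSnn x hx)
  have hSmono : ∀ x y, 0 ≤ x → x ≤ y → S x ≤ S y := by
    intro x y hx hxy
    refine Real.sSup_le ?_ (hSnn y (hx.trans hxy))
    rintro v ⟨t, ⟨ht0, htx⟩, rfl⟩
    calc h t * (x - t) ≤ h t * (y - t) :=
          mul_le_mul_of_nonneg_left (by linarith) (hh_nn t)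
      _ ≤ S y := hterm y (hx.trans hxy) t ht0
  have hS0 : S 0 = 0 := by
    have : Set.Icc (0:ℝ) 0 = {0} := Set.Icc_self 0
    simp only [hSdef, this, Set.image_singleton, csSup_singleton, sub_zero, mul_zero]
  have hSconv : ConvexOn ℝ (Set.Ici 0) S := by
    refine ⟨convex_Ici 0, ?_⟩
    intro x hx y hy a b ha hb hab
    simp only [Set.mem_Ici] at hx hy
    have hz : 0 ≤ a * x + b * y := add_nonneg (mul_nonneg ha hx) (mul_nonneg hb hy)
    simp only [smul_eq_mul]
    refine Real.sSup_le ?_ (add_nonneg (mul_nonneg ha (hSnn x hx)) (mul_nonneg hb (hSnn y hy)))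
    rintro v ⟨t, ⟨ht0, htz⟩, rfl⟩
    have e : h t * (a * x + b * y - t) = a * (h t * (x - t)) + b * (h t * (y - t)) := by
      have h5 : a * x + b * y - t = a * (x - t) + b * (y - t) := by
        linear_combination t * hab
      rw [h5]; ring
    show h t * (a * x + b * y - t) ≤ a * S x + b * S y
    rw [e]
    exact add_le_add (mul_le_mul_of_nonneg_left (hterm x hx t ht0) ha)
      (mul_le_mul_of_nonneg_left (hterm y hy t ht0) hb)
  refine ⟨fun x => x + S x, ⟨?_, ?_, ?_⟩, ?_, ?_⟩
  · intro x hx y hy hxy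
    exact add_lt_add_of_lt_of_le hxy (hSmono x y hx hxy.le)
  · exact (convexOn_id (convex_Ici 0)).add hSconv
  · simp [hS0]
  · -- DominR H (fun x => x + S x)
    refine ⟨1, 2, max x₀ 1, one_pos, two_pos, lt_of_lt_of_le one_pos (le_max_right _ _), ?_⟩
    intro x hx
    have hxx₀ : x₀ ≤ x := le_trans (le_max_left _ _) hx
    have hx0 : 0 < x := lt_of_lt_of_le hx₀ hxx₀
    have hmem : h x * (2 * x - x) ≤ S (2 * x) :=
      le_csSup (hBdd (2*x) (by linarith)) ⟨x, ⟨hx0.le, by linarith⟩, rfl⟩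
    have he : h x * (2 * x - x) = H x := by
      rw [hhx x hxx₀]
      have h6 : 2 * x - x = x := by ring
      rw [h6, div_mul_cancel₀ _ (ne_of_gt hx0)]
    rw [he] at hmem
    have : 0 ≤ 2 * x := by linarith
    simp only [one_mul]
    linarith
  · -- DominR (fun x => x + S x) H
    refine ⟨C / K + C, 1, x₀, by positivity, one_pos, hx₀, ?_⟩
    intro x hx
    have hx0 : 0 < x := lt_of_lt_of_le hx₀ hx
    have hlin : K * x ≤ C * H x := by
      have hs : (1:ℝ) ≤ x / x₀ := (one_le_div hx₀).2 hx
      have h1 := hii (x/x₀) hs x₀ le_rfl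
      rw [div_mul_cancel₀ _ (ne_of_gt hx₀)] at h1
      have h2 : x / x₀ * H x₀ ≤ C * H x := by
        calc x / x₀ * H x₀ = C * (C⁻¹ * (x/x₀) * H x₀) := by field_simp
          _ ≤ C * H x := by nlinarith
      calc K * x = x / x₀ * H x₀ := by rw [hKdef]; field_simp
        _ ≤ C * H x := h2
    have hSle : S x ≤ C * H x := by
      refine Real.sSup_le ?_ (mul_nonneg hC.le (hnn x hx0.le))
      rintro v ⟨t, ⟨ht0, htx⟩, rfl⟩
      calc h t * (x - t) ≤ h t * x := by nlinarith [hh_nn t]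
        _ ≤ C * h x * x := mul_le_mul_of_nonneg_right (hai x hx t ht0 htx) hx0.le
        _ = C * H x := by rw [hhx x hx]; field_simp
    have hxle : x ≤ (C / K) * H x := by
      rw [div_mul_eq_mul_div, le_div_iff₀ hKp]
      nlinarith
    simp only [one_mul]
    calc x + S x ≤ (C / K) * H x + C * H x := add_le_add hxle hSle
      _ = (C / K + C) * H x := by ring

lemma ii_of_young (H : ℝ → ℝ)
    (hmono : ∀ x y : ℝ, 0 ≤ x → x ≤ y → H x ≤ H y)
    (hnn : ∀ x ≥ (0:ℝ), 0 ≤ H x)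
    (Y : ℝ → ℝ) (hY : IsYoung Y) (hHY : DominR H Y) (hYH : DominR Y H) :
    ∃ C x₀ : ℝ, 0 < C ∧ 0 < x₀ ∧ ∀ s ≥ (1:ℝ), ∀ x ≥ x₀,
      C⁻¹ * s * H x ≤ H (s * x) := by
  obtain ⟨A, a, x₁, hA, ha, hx₁, hHYle⟩ := hHY
  obtain ⟨B, b, x₂, hB, hb, hx₂, hYHle⟩ := hYH
  obtain ⟨hYs, hYc, hY0⟩ := hY
  have hYnn : ∀ t : ℝ, 0 ≤ t → 0 ≤ Y t := by
    intro t ht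
    rcases eq_or_lt_of_le ht with h | h
    · rw [← h, hY0]
    · rw [← hY0]
      exact (hYs (Set.mem_Ici.2 le_rfl) (Set.mem_Ici.2 ht) h).le
  have hsh : ∀ s t : ℝ, 1 ≤ s → 0 ≤ t → s * Y t ≤ Y (s * t) := by
    intro s t hs ht
    have hs0 : 0 < s := lt_of_lt_of_le one_pos hs
    have hst : 0 ≤ s * t := mul_nonneg hs0.le ht
    have hinv : (0:ℝ) ≤ s⁻¹ := inv_nonneg.2 hs0.le
    have hinv1 : s⁻¹ ≤ 1 := inv_le_one_of_one_le₀ hs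
    have h1 := hYc.2 (Set.mem_Ici.2 hst) (Set.mem_Ici.2 (le_refl (0:ℝ)))
      hinv (by linarith : (0:ℝ) ≤ 1 - s⁻¹) (by ring)
    simp only [smul_eq_mul, mul_zero, add_zero, hY0] at h1
    rw [inv_mul_cancel_left₀ (ne_of_gt hs0)] at h1
    -- h1 : Y t ≤ s⁻¹ * Y (s * t) + (1 - s⁻¹) * 0
    have h2 : Y t ≤ s⁻¹ * Y (s * t) := by linarith
    calc s * Y t ≤ s * (s⁻¹ * Y (s * t)) := mul_le_mul_of_nonneg_left h2 hs0.le
      _ = Y (s * t) := by field_simp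
  set κ := a * b with hκ
  have hκ0 : 0 < κ := mul_pos ha hb
  set κ' := max κ 1 with hκ'
  have hκ'1 : (1:ℝ) ≤ κ' := le_max_right _ _
  have hκ'0 : 0 < κ' := lt_of_lt_of_le one_pos hκ'1
  set X := max (max x₁ (x₂ / a)) 1 with hX
  have hX1 : (1:ℝ) ≤ X := le_max_right _ _
  have hX0 : 0 < X := lt_of_lt_of_le one_pos hX1
  have chain : ∀ s x : ℝ, 1 ≤ s → X ≤ x → s * H x ≤ A * B * H (κ * s * x) := by
    intro s x hs hx
    have hx1 : x₁ ≤ x := le_trans (le_trans (le_max_left _ _) (le_max_left _ _)) hx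
    have hx2a : x₂ / a ≤ x := le_trans (le_trans (le_max_right _ _) (le_max_left _ _)) hx
    have hx0 : 0 < x := lt_of_lt_of_le hX0 hx
    have hax : 0 ≤ a * x := mul_nonneg ha.le hx0.le
    have haxx₂ : x₂ ≤ a * x := by
      rw [div_le_iff₀ ha] at hx2a; linarith [hx2a]
    have hsax : x₂ ≤ s * (a * x) := le_trans haxx₂ (le_mul_of_one_le_left hax hs)
    have c1 : H x ≤ A * Y (a * x) := hHYle x hx1
    have c2 : s * Y (a * x) ≤ Y (s * (a * x)) := hsh s (a * x) hs hax
    have c3 : Y (s * (a * x)) ≤ B * H (b * (s * (a * x))) := hYHle _ hsax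
    have e : b * (s * (a * x)) = κ * s * x := by rw [hκ]; ring
    rw [e] at c3
    have hYax : 0 ≤ Y (a * x) := hYnn _ hax
    calc s * H x ≤ s * (A * Y (a * x)) :=
          mul_le_mul_of_nonneg_left c1 (by linarith)
      _ = A * (s * Y (a * x)) := by ring
      _ ≤ A * Y (s * (a * x)) := mul_le_mul_of_nonneg_left c2 hA.le
      _ ≤ A * (B * H (κ * s * x)) := mul_le_mul_of_nonneg_left c3 hA.le
      _ = A * B * H (κ * s * x) := by ring
  refine ⟨κ' * (A * B + 1), X, by positivity, hX0, ?_⟩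
  intro s hs x hx
  have hx0 : 0 < x := lt_of_lt_of_le hX0 hx
  have hCpos : 0 < κ' * (A * B + 1) := by positivity
  rw [mul_assoc, inv_mul_le_iff₀ hCpos]
  have hHsx : 0 ≤ H (s * x) := hnn _ (by positivity)
  have hHx : 0 ≤ H x := hnn _ hx0.le
  rcases le_or_gt s κ' with hcase | hcase
  · have h1 : H x ≤ H (s * x) := hmono x (s * x) hx0.le (le_mul_of_one_le_left hx0.le hs)
    have hAB1 : (1:ℝ) ≤ A * B + 1 := by nlinarith
    calc s * H x ≤ κ' * H x := mul_le_mul_of_nonneg_right hcase hHx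
      _ ≤ κ' * H (s * x) := mul_le_mul_of_nonneg_left h1 hκ'0.le
      _ ≤ κ' * (A * B + 1) * H (s * x) := by
          nlinarith [mul_nonneg (mul_nonneg hκ'0.le (mul_pos hA hB).le) hHsx]
  · set s' := s / κ' with hs'
    have hs'1 : (1:ℝ) ≤ s' := (one_le_div hκ'0).2 hcase.le
    have hch := chain s' x hs'1 hx
    have hmm : H (κ * s' * x) ≤ H (s * x) := by
      refine hmono _ _ (by positivity) ?_
      have : κ * s' ≤ κ' * s' :=
        mul_le_mul_of_nonneg_right (le_max_left κ 1) (by linarith)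
      have e2 : κ' * s' = s := by rw [hs']; field_simp
      nlinarith
    have h3 : s' * H x ≤ A * B * H (s * x) := by
      calc s' * H x ≤ A * B * H (κ * s' * x) := hch
        _ ≤ A * B * H (s * x) := mul_le_mul_of_nonneg_left hmm (by positivity)
    have e2 : κ' * s' = s := by rw [hs']; field_simp
    calc s * H x = κ' * (s' * H x) := by rw [← e2]; ring
      _ ≤ κ' * (A * B * H (s * x)) := mul_le_mul_of_nonneg_left h3 hκ'0.le
      _ ≤ κ' * (A * B + 1) * H (s * x) := by nlinarith [hκ'0.le, hHsx]

/-- Equivalence of the three conditions from Lemma 5.4 (asymptotic convexity). -/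
theorem stmt5 (F G Ginv : ℝ → ℝ)
    (hFmono : StrictMonoOn F (Set.Ici 0)) (hGmono : StrictMonoOn G (Set.Ici 0))
    (hFc : ContinuousOn F (Set.Ici 0)) (hGc : ContinuousOn G (Set.Ici 0))
    (hF0 : F 0 = 0) (hG0 : G 0 = 0)
    (hFi : Tendsto F atTop atTop) (hGi : Tendsto G atTop atTop)
    (hGinv : ∀ x ≥ (0:ℝ), 0 ≤ Ginv x ∧ G (Ginv x) = x) :
    ((∃ Y, IsYoung Y ∧ EquivR (fun x => F (Ginv x)) Y) ↔
      (∃ C x₀ : ℝ, 0 < C ∧ 0 < x₀ ∧ ∀ s ≥ (1:ℝ), ∀ x ≥ x₀,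
        C⁻¹ * s * F (Ginv x) ≤ F (Ginv (s * x)))) ∧
    ((∃ C x₀ : ℝ, 0 < C ∧ 0 < x₀ ∧ ∀ s ≥ (1:ℝ), ∀ x ≥ x₀,
        C⁻¹ * s * F (Ginv x) ≤ F (Ginv (s * x))) ↔
      (∃ C x₀ : ℝ, 0 < C ∧ 0 < x₀ ∧ ∀ s ≥ (1:ℝ), ∀ x ≥ x₀,
        C⁻¹ * (G (s * x) / G x) ≤ F (s * x) / F x)) := by
  -- Basic facts
  have hGnn : ∀ y : ℝ, 0 ≤ y → 0 ≤ G y := by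
    intro y hy
    rw [← hG0]
    exact hGmono.monotoneOn (Set.mem_Ici.2 le_rfl) (Set.mem_Ici.2 hy) hy
  have hFnn : ∀ y : ℝ, 0 ≤ y → 0 ≤ F y := by
    intro y hy
    rw [← hF0]
    exact hFmono.monotoneOn (Set.mem_Ici.2 le_rfl) (Set.mem_Ici.2 hy) hy
  have hFpos : ∀ y : ℝ, 0 < y → 0 < F y := by
    intro y hy
    rw [← hF0]
    exact hFmono (Set.mem_Ici.2 le_rfl) (Set.mem_Ici.2 hy.le) hy
  have hGinvG : ∀ y : ℝ, 0 ≤ y → Ginv (G y) = y := by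
    intro y hy
    exact hGmono.injOn (Set.mem_Ici.2 (hGinv (G y) (hGnn y hy)).1) (Set.mem_Ici.2 hy)
      ((hGinv (G y) (hGnn y hy)).2)
  have hGinvmono : ∀ x y : ℝ, 0 ≤ x → x ≤ y → Ginv x ≤ Ginv y := by
    intro x y hx hxy
    by_contra hcon
    push_neg at hcon
    have := hGmono (Set.mem_Ici.2 (hGinv y (by linarith)).1)
      (Set.mem_Ici.2 (hGinv x hx).1) hcon
    rw [(hGinv x hx).2, (hGinv y (by linarith)).2] at this
    linarith
  have hGinvpos : ∀ x : ℝ, 0 < x → 0 < Ginv x := by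
    intro x hx
    rcases eq_or_lt_of_le (hGinv x hx.le).1 with h | h
    · exfalso
      have := (hGinv x hx.le).2
      rw [← h, hG0] at this
      linarith
    · exact h
  have hHnn : ∀ x ≥ (0:ℝ), 0 ≤ F (Ginv x) := fun x hx => hFnn _ (hGinv x hx).1
  have hHpos : ∀ x : ℝ, 0 < x → 0 < F (Ginv x) := fun x hx => hFpos _ (hGinvpos x hx)
  have hHmono : ∀ x y : ℝ, 0 ≤ x → x ≤ y → F (Ginv x) ≤ F (Ginv y) := by
    intro x y hx hxy
    exact hFmono.monotoneOn (Set.mem_Ici.2 (hGinv x hx).1)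
      (Set.mem_Ici.2 (hGinv y (by linarith)).1) (hGinvmono x y hx hxy)
  constructor
  · constructor
    · rintro ⟨Y, hY, hHY, hYH⟩
      exact ii_of_young (fun x => F (Ginv x)) hHmono hHnn Y hY hHY hYH
    · rintro ⟨C, x₀, hC, hx₀, hii⟩
      exact young_of_ii (fun x => F (Ginv x)) hHnn C x₀ hC hx₀ (hHpos x₀ hx₀) hii
  · constructor
    · rintro ⟨C, x₀, hC, hx₀, hii⟩
      obtain ⟨M, hM⟩ := eventually_atTop.1 (hGi.eventually_ge_atTop x₀)
      refine ⟨C, max M 1, hC, lt_of_lt_of_le one_pos (le_max_right _ _), ?_⟩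
      intro s hs x hx
      have hx1 : (1:ℝ) ≤ x := le_trans (le_max_right _ _) hx
      have hx0 : (0:ℝ) < x := lt_of_lt_of_le one_pos hx1
      have hGx : x₀ ≤ G x := hM x (le_trans (le_max_left _ _) hx)
      have hGx0 : 0 < G x := lt_of_lt_of_le hx₀ hGx
      have hxsx : x ≤ s * x := le_mul_of_one_le_left hx0.le hs
      have hGsx : G x ≤ G (s * x) :=
        hGmono.monotoneOn (Set.mem_Ici.2 hx0.le) (Set.mem_Ici.2 (by linarith)) hxsx
      have ht : (1:ℝ) ≤ G (s * x) / G x := (one_le_div hGx0).2 hGsx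
      have h := hii (G (s * x) / G x) ht (G x) hGx
      rw [div_mul_cancel₀ _ (ne_of_gt hGx0)] at h
      rw [hGinvG x hx0.le, hGinvG (s * x) (by linarith)] at h
      -- h : C⁻¹ * (G (s*x) / G x) * F x ≤ F (s * x)
      rw [le_div_iff₀ (hFpos x hx0)]
      exact h
    · rintro ⟨C, x₀, hC, hx₀, hiii⟩
      set y₀ := max x₀ 1 with hy₀def
      have hy₀1 : (1:ℝ) ≤ y₀ := le_max_right _ _
      have hy₀0 : (0:ℝ) < y₀ := lt_of_lt_of_le one_pos hy₀1
      refine ⟨C, max (G y₀) 1, hC, lt_of_lt_of_le one_pos (le_max_right _ _), ?_⟩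
      intro s hs x hx
      have hx1 : (1:ℝ) ≤ x := le_trans (le_max_right _ _) hx
      have hx0 : (0:ℝ) < x := lt_of_lt_of_le one_pos hx1
      set y := Ginv x with hydef
      have hy0 : 0 ≤ y := (hGinv x hx0.le).1
      have hyy₀ : y₀ ≤ y := by
        by_contra hcon
        push_neg at hcon
        have h1 : G y < G y₀ := hGmono (Set.mem_Ici.2 hy0) (Set.mem_Ici.2 hy₀0.le) hcon
        rw [hydef, (hGinv x hx0.le).2] at h1
        have h2 : G y₀ ≤ x := le_trans (le_max_left _ _) hx
        linarith
      have hyx₀ : x₀ ≤ y := le_trans (le_max_left _ _) hyy₀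
      have hyp : 0 < y := lt_of_lt_of_le hy₀0 hyy₀
      have hsx0 : 0 ≤ s * x := by positivity
      set u := Ginv (s * x) with hudef
      have hu0 : 0 ≤ u := (hGinv (s * x) hsx0).1
      have hyu : y ≤ u := hGinvmono x (s * x) hx0.le (le_mul_of_one_le_left hx0.le hs)
      have ht : (1:ℝ) ≤ u / y := (one_le_div hyp).2 hyu
      have h := hiii (u / y) ht y hyx₀
      rw [div_mul_cancel₀ _ (ne_of_gt hyp)] at h
      rw [hydef, hudef] at h
      rw [(hGinv x hx0.le).2, (hGinv (s * x) hsx0).2] at h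
      -- h : C⁻¹ * ((s*x) / x) ≤ F (Ginv (s*x)) / F (Ginv x)
      rw [mul_div_assoc, div_self (ne_of_gt hx0), mul_one] at h
      have hFy : 0 < F (Ginv x) := hHpos x hx0
      have h2 := (le_div_iff₀ hFy).1 h
      exact h2
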